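/- arXiv:1810.00716 — 2 statements merged into one kernel-verified Lean document; each statement's English description precedes it below -/
import Mathlib

section
/- Let d ≥ 2 and k ≥ 1 be integers. For every integer 0 ≤ a ≤ d−2, the number of partitions of d(d+k−1) having diagonal lengths T(d,k), satisfying the CI criterion, having exactly d parts, and whose smallest part equals a+k, is 2^{d−2−a}. Moreover there is exactly one such partition whose smallest part equals d+k−1, namely the rectangle consisting of d parts each equal to d+k−1. -/
open MvPolynomial

/-- A partition, represented as a decreasingly sorted list of positive integers. -/
def IsPartitionList (P : List ℕ) : Prop :=
  P.Pairwise (· ≥ ·) ∧ ∀ p ∈ P, 0 < p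

/-- `P` is the Jordan type of the `F`-linear endomorphism `u`:
for every `m ≥ 1`, the number of parts of `P` that are at least `m` equals
`dim (range u^(m-1)) - dim (range u^m)`. -/
def IsJordanTypeOf (F : Type) [Field F] {A : Type} [AddCommGroup A] [Module F A]
    (P : List ℕ) (u : A →ₗ[F] A) : Prop :=
  ∀ m : ℕ, 1 ≤ m →
    (P.filter (fun p => m ≤ p)).length =
      Module.finrank F (LinearMap.range (u ^ (m - 1))) -
        Module.finrank F (LinearMap.range (u ^ m))

/-- The `i`-th diagonal length of a partition `P`: the number of pairs `(r, c)`
with `r + c = i` and `c < p_(r+1)`. -/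
def diagLen (P : List ℕ) (i : ℕ) : ℕ :=
  ((Finset.range (i + 1)).filter (fun r => i - r < P.getD r 0)).card

/-- The complete intersection Hilbert function `T(d,k)`. -/
def Tdk (d k i : ℕ) : ℕ :=
  if i ≤ 2 * d + k - 3 then min (min (i + 1) d) (2 * d + k - 2 - i) else 0

/-- Multiplication by (the class of) `h` on the quotient `F[x,y]/I`, as an `F`-linear map. -/
noncomputable def mulMap (F : Type) [Field F] (I : Ideal (MvPolynomial (Fin 2) F))
    (h : MvPolynomial (Fin 2) F) :
    (MvPolynomial (Fin 2) F ⧸ I) →ₗ[F] (MvPolynomial (Fin 2) F ⧸ I) :=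
  Algebra.lmul F (MvPolynomial (Fin 2) F ⧸ I) (Ideal.Quotient.mk I h)

/-- `P` is a complete intersection Jordan type for `(d, k)` over `F`. -/
def IsCIJT (F : Type) [Field F] (d k : ℕ) (P : List ℕ) : Prop :=
  ∃ f g ℓ : MvPolynomial (Fin 2) F,
    f.IsHomogeneous d ∧ g.IsHomogeneous (d + k - 1) ∧
    ℓ.IsHomogeneous 1 ∧ ℓ ≠ 0 ∧
    FiniteDimensional F (MvPolynomial (Fin 2) F ⧸ Ideal.span {f, g}) ∧
    IsJordanTypeOf F P (mulMap F (Ideal.span {f, g}) ℓ)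

/-- The degree-`i` graded component of `F[x,y]/I`. -/
noncomputable def gradedPiece (F : Type) [Field F] (I : Ideal (MvPolynomial (Fin 2) F)) (i : ℕ) :
    Submodule F (MvPolynomial (Fin 2) F ⧸ I) :=
  (MvPolynomial.homogeneousSubmodule (Fin 2) F i).map (Ideal.Quotient.mkₐ F I).toLinearMap

/-- The rank of the `i`-th Hessian at `ℓ`: the dimension of `ℓ̄^(j-2i) · A_i`. -/
noncomputable def hessRank (F : Type) [Field F] (I : Ideal (MvPolynomial (Fin 2) F))
    (ℓ : MvPolynomial (Fin 2) F) (j i : ℕ) : ℕ :=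
  Module.finrank F
    ((gradedPiece F I i).map (mulMap F I (ℓ ^ (j - 2 * i))))

/-- The partition `(p_1^{n_1}, …, p_t^{n_t})` in power form, as a list. -/
def powerList (t : ℕ) (p n : Fin t → ℕ) : List ℕ :=
  (List.ofFn fun i => List.replicate (n i) (p i)).flatten

/-- The CI criterion for a partition `P`: writing `P` in power form
`(p_1^{n_1}, …, p_t^{n_t})` with `p_1 > ⋯ > p_t`, for every `2 ≤ i ≤ t` one has
`p_(i-1) = n_(i-1) + n_i + p_i`.  Phrased intrinsically: for any two adjacent
part sizes `a > b` of `P`, `a = (count of a) + (count of b) + b`. -/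
def CICriterion (P : List ℕ) : Prop :=
  ∀ a b : ℕ, a ∈ P → b ∈ P → b < a → (∀ x ∈ P, x ≤ b ∨ a ≤ x) →
    a = P.count a + P.count b + b

/-- The CIJT partition `(p_1^{n_1}, …, p_c^{n_c}, (d-n)^{d-n+k-1})` built from a
list `L = [n_1, …, n_c]` of positive integers with sum `n`, where
`p_i = k - 1 + 2d - n_i - 2(n_1 + ⋯ + n_(i-1))`; the trailing block is empty
when `n = d`. -/
def ciList (d k : ℕ) (L : List ℕ) : List ℕ :=
  (List.ofFn fun i : Fin L.length =>
      List.replicate (L.get i) (k - 1 + 2 * d - L.get i - 2 * (L.take i).sum)).flatten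
    ++ (if L.sum = d then [] else List.replicate (d - L.sum + k - 1) (d - L.sum))

/-- The smallest part of a partition list (sorted decreasingly), i.e. its last entry. -/
def minPart (P : List ℕ) : ℕ := P.getLastD 0

/-- The map `ι`: replace the `n_t` parts equal to the smallest part `p_t` by
`p_t` parts equal to `n_t` (conjugate the smallest rectangular block). -/
def iotaMap (P : List ℕ) : List ℕ :=
  P.filter (fun x => x ≠ minPart P) ++ List.replicate (minPart P) (P.count (minPart P))

/-- The set of partitions of `d(d+k-1)` with diagonal lengths `T(d,k)`, satisfying the
CI criterion, and having exactly `len` parts. -/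
def ciSet (d k len : ℕ) : Set (List ℕ) :=
  {P | IsPartitionList P ∧ P.sum = d * (d + k - 1) ∧
    (∀ i : ℕ, diagLen P i = Tdk d k i) ∧ CICriterion P ∧ P.length = len}

namespace Stmt16

def qf (P : List ℕ) (r : ℕ) : ℕ := P.getD r 0 + r

def ciSet' (d k : ℕ) : Set (List ℕ) :=
  {P | P.Pairwise (· ≥ ·) ∧ (∀ p ∈ P, 0 < p) ∧ P.length = d ∧ CICriterion P ∧
    minPart P + 1 = P.count (minPart P) + k}

lemma minPart_cons_cons (a b : ℕ) (s : List ℕ) :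
    minPart (a :: b :: s) = minPart (b :: s) := by
  simp [minPart, List.getLastD_cons]

lemma minPart_mem : ∀ {P : List ℕ}, P ≠ [] → minPart P ∈ P := by
  intro P
  induction P with
  | nil => intro h; exact absurd rfl h
  | cons a t ih =>
    intro _
    cases t with
    | nil => simp [minPart]
    | cons b s =>
      rw [minPart_cons_cons]
      exact List.mem_cons_of_mem _ (ih (by simp))

lemma minPart_le : ∀ {P : List ℕ}, P.Pairwise (· ≥ ·) → ∀ x ∈ P, minPart P ≤ x := by
  intro P
  induction P with
  | nil => intro _ x hx; simp at hx
  | cons a t ih =>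
    intro hs x hx
    cases t with
    | nil =>
      rcases List.mem_cons.1 hx with rfl | hx'
      · simp [minPart]
      · simp at hx'
    | cons b s =>
      rw [minPart_cons_cons]
      rcases List.mem_cons.1 hx with rfl | hx'
      · exact le_trans (ih hs.of_cons b (by simp))
          (List.rel_of_pairwise_cons hs (a' := b) (by simp))
      · exact ih hs.of_cons x hx'

lemma getD_replicate' {m b r : ℕ} (h : r < m) : (List.replicate m b).getD r 0 = b := by
  rw [List.getD_eq_getElem _ _ (by simpa using h), List.getElem_replicate]

lemma getLastD_irrel (t : List ℕ) (h : t ≠ []) (a : ℕ) : t.getLastD a = t.getLastD 0 := by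
  cases t with
  | nil => exact absurd rfl h
  | cons b u => rw [List.getLastD_cons, List.getLastD_cons]

lemma getLastD_replicate (b : ℕ) : ∀ m, 1 ≤ m → (List.replicate m b).getLastD 0 = b := by
  intro m
  induction m with
  | zero => intro h; omega
  | succ s ih =>
    intro _
    rw [List.replicate_succ, List.getLastD_cons]
    cases s with
    | zero => simp
    | succ s' =>
      rw [getLastD_irrel _ (by simp) b]
      exact ih (by omega)

lemma minPart_append {F : List ℕ} {m b : ℕ} (hm : 1 ≤ m) :
    minPart (F ++ List.replicate m b) = b := by
  unfold minPart
  induction F with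
  | nil => simpa using getLastD_replicate b m hm
  | cons a t ih =>
    rw [List.cons_append, List.getLastD_cons, getLastD_irrel, ih]
    intro h
    have : (t ++ List.replicate m b).length = 0 := by rw [h]; rfl
    rw [List.length_append, List.length_replicate] at this
    omega

lemma suffix_decomp : ∀ (P : List ℕ), P.Pairwise (· ≥ ·) → P ≠ [] →
    P = P.take (P.length - P.count (minPart P)) ++
        List.replicate (P.count (minPart P)) (minPart P) ∧
      ∀ x ∈ P.take (P.length - P.count (minPart P)), minPart P < x := by
  intro P
  induction P with
  | nil => intro _ hne; exact absurd rfl hne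
  | cons a t ih =>
    intro hs _
    cases t with
    | nil =>
      refine ⟨?_, ?_⟩ <;> simp [minPart]
    | cons c s =>
      rw [minPart_cons_cons]
      set T := c :: s with hT
      have hTne : T ≠ [] := by simp [hT]
      set bb := minPart T with hbb
      have hsT : T.Pairwise (· ≥ ·) := hs.of_cons
      have hbbT : bb ∈ T := minPart_mem hTne
      have hage : bb ≤ a := List.rel_of_pairwise_cons hs (a' := bb) hbbT
      by_cases hab : a = bb
      · have hall : ∀ x ∈ a :: T, x = bb := by
          intro x hx
          rcases List.mem_cons.1 hx with rfl | hx'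
          · exact hab
          · exact le_antisymm (hab ▸ List.rel_of_pairwise_cons hs (a' := x) hx')
              (minPart_le hsT x hx')
        have hcount : (a :: T).count bb = (a :: T).length :=
          List.count_eq_length.2 (fun x hx => (hall x hx).symm)
        rw [hcount]
        constructor
        · rw [Nat.sub_self, List.take_zero, List.nil_append]
          exact List.eq_replicate_iff.2 ⟨rfl, hall⟩
        · rw [Nat.sub_self, List.take_zero]; intro x hx; simp at hx
      · have hagt : bb < a := lt_of_le_of_ne hage (fun h => hab h.symm)
        have hcount : (a :: T).count bb = T.count bb :=
          List.count_cons_of_ne (fun h => hab h)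
        obtain ⟨ih1, ih2⟩ := ih hsT hTne
        have hcle : T.count bb ≤ T.length := List.count_le_length
        rw [hcount]
        have hlen' : (a :: T).length - T.count bb = (T.length - T.count bb) + 1 := by
          simp only [List.length_cons]; omega
        rw [hlen', List.take_succ_cons]
        constructor
        · rw [List.cons_append]
          exact congrArg (a :: ·) ih1
        · intro x hx
          rcases List.mem_cons.1 hx with rfl | hx'
          · exact hagt
          · exact ih2 x hx'

end Stmt16

namespace Stmt16

lemma CI_of_append {F : List ℕ} {m b : ℕ} (hb : ∀ x ∈ F, b < x)
    (hci : CICriterion (F ++ List.replicate m b)) : CICriterion F := by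
  intro x y hx hy hxy hadj
  have hbx : ¬ (b = x) := fun h => by have := hb x hx; omega
  have hby : ¬ (b = y) := fun h => by have := hb y hy; omega
  have h := hci x y (List.mem_append_left _ hx) (List.mem_append_left _ hy) hxy ?_
  · rwa [List.count_append, List.count_append, List.count_replicate, List.count_replicate,
      if_neg (by simpa using hbx), if_neg (by simpa using hby), add_zero, add_zero] at h
  · intro z hz
    rcases List.mem_append.1 hz with hzF | hzr
    · exact hadj z hzF
    · left
      have := List.eq_of_mem_replicate hzr
      have := hb y hy
      omega

lemma CI_append {F : List ℕ} {m b : ℕ} (hsF : F.Pairwise (· ≥ ·)) (hFne : F ≠ [])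
    (hb : ∀ x ∈ F, b < x) (hciF : CICriterion F)
    (hlink : minPart F = F.count (minPart F) + m + b) :
    CICriterion (F ++ List.replicate m b) := by
  intro x y hx hy hxy hadj
  rcases List.mem_append.1 hy with hyF | hyr
  · have hbyy : b < y := hb y hyF
    have hxF : x ∈ F := by
      rcases List.mem_append.1 hx with h | h
      · exact h
      · have := List.eq_of_mem_replicate h; omega
    have hbx : ¬ (b = x) := fun h => by have := hb x hxF; omega
    have hby : ¬ (b = y) := fun h => by omega
    rw [List.count_append, List.count_append, List.count_replicate, List.count_replicate,
      if_neg (by simpa using hbx), if_neg (by simpa using hby), add_zero, add_zero]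
    refine hciF x y hxF hyF hxy ?_
    intro z hz
    exact hadj z (List.mem_append_left _ hz)
  · have hyb : y = b := List.eq_of_mem_replicate hyr
    subst hyb
    have hxF : x ∈ F := by
      rcases List.mem_append.1 hx with h | h
      · exact h
      · have := List.eq_of_mem_replicate h; omega
    have hbp : minPart F ∈ F := minPart_mem hFne
    have hxeq : x = minPart F := by
      rcases hadj (minPart F) (List.mem_append_left _ hbp) with h | h
      · have := hb (minPart F) hbp; omega
      · exact le_antisymm h (minPart_le hsF x hxF)
    have hbx : ¬ (y = x) := fun h => by have := hb x hxF; omega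
    have hcb : F.count y = 0 := List.count_eq_zero.2 (fun h => by have := hb y h; omega)
    rw [List.count_append, List.count_append, List.count_replicate, List.count_replicate,
      if_neg (by simpa using hbx), if_pos (by simp), add_zero, hcb, zero_add, hxeq]
    rw [hxeq] at *
    exact hlink

lemma claimA : ∀ (n : ℕ) (P : List ℕ), P.length = n → P.Pairwise (· ≥ ·) →
    (∀ p ∈ P, 0 < p) → CICriterion P → P ≠ [] →
    (Finset.range P.length).image (qf P) =
      Finset.Icc (minPart P + P.length - P.count (minPart P))
        (minPart P + 2 * P.length - P.count (minPart P) - 1) := by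
  intro n
  induction n using Nat.strong_induction_on with
  | _ n ih =>
  intro P hlen hs hpos hci hne
  set b := minPart P with hbdef
  set m := P.count b with hmdef
  have hbmem : b ∈ P := minPart_mem hne
  have hm1 : 1 ≤ m := List.count_pos_iff.2 hbmem
  have hmle : m ≤ P.length := List.count_le_length
  have hb1 : 1 ≤ b := hpos b hbmem
  have hn1 : 1 ≤ P.length := by
    cases P with
    | nil => exact absurd rfl hne
    | cons a t => simp
  by_cases hcase : m = P.length
  · -- P is a rectangle
    have hall : ∀ x ∈ P, b = x := List.count_eq_length.1 (hmdef.symm.trans hcase)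
    have hQ : ∀ r < P.length, qf P r = b + r := by
      intro r hr
      unfold qf
      have : P.getD r 0 = b := by
        rw [List.getD_eq_getElem _ _ hr]
        exact (hall _ (List.getElem_mem _)).symm
      rw [this]
    ext v
    simp only [Finset.mem_image, Finset.mem_range, Finset.mem_Icc]
    constructor
    · rintro ⟨r, hr, hv⟩
      rw [hQ r hr] at hv
      omega
    · intro hv
      exact ⟨v - b, by omega, by rw [hQ _ (by omega)]; omega⟩
  · -- main case: strip the bottom block
    obtain ⟨hdecomp, hgt⟩ := suffix_decomp P hs hne
    rw [← hbdef, ← hmdef] at hdecomp hgt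
    set F := P.take (P.length - m) with hFdef
    have hFlen : F.length = P.length - m := by
      rw [hFdef, List.length_take]; omega
    have hFne : F ≠ [] := by
      intro h
      rw [h] at hFlen
      simp at hFlen
      omega
    have hFmem : ∀ x ∈ F, x ∈ P := fun x hx => hdecomp ▸ (List.mem_append_left _ hx)
    have hsF : F.Pairwise (· ≥ ·) := List.Pairwise.sublist (List.take_sublist _ _) hs
    have hposF : ∀ p ∈ F, 0 < p := fun p hp => hpos p (hFmem p hp)
    have hciP' : CICriterion (F ++ List.replicate m b) := hdecomp ▸ hci
    have hciF : CICriterion F := CI_of_append hgt hciP'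
    set b' := minPart F with hb'def
    set m' := F.count b' with hm'def
    have hb'F : b' ∈ F := minPart_mem hFne
    have hb'P : b' ∈ P := hFmem _ hb'F
    have hbb' : b < b' := hgt _ hb'F
    have hm'1 : 1 ≤ m' := List.count_pos_iff.2 hb'F
    have hm'le : m' ≤ F.length := List.count_le_length
    have hcountb' : P.count b' = m' := by
      have h1 : P.count b' = F.count b' + (List.replicate m b).count b' := by
        conv_lhs => rw [hdecomp]
        rw [List.count_append]
      rw [h1, List.count_replicate, if_neg (by simp; omega), add_zero]
    have hlink : b' = m' + m + b := by
      have h := hci b' b hb'P hbmem hbb' ?_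
      · rw [hcountb'] at h
        rw [← hmdef] at h
        omega
      · intro z hz
        rcases List.mem_append.1 (hdecomp ▸ hz) with hzF | hzr
        · right; exact minPart_le hsF z hzF
        · left; have := List.eq_of_mem_replicate hzr; omega
    have hIH := ih F.length (by omega) F rfl hsF hposF hciF hFne
    rw [← hb'def, ← hm'def] at hIH
    have hQlow : ∀ r < F.length, qf P r = qf F r := by
      intro r hr
      unfold qf
      conv_lhs => rw [hdecomp]
      rw [List.getD_append _ _ _ _ hr]
    have hQhigh : ∀ r, F.length ≤ r → r < P.length → qf P r = b + r := by
      intro r h1 h2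
      unfold qf
      conv_lhs => rw [hdecomp]
      rw [List.getD_append_right _ _ _ _ h1, getD_replicate' (by omega)]
    ext v
    simp only [Finset.mem_image, Finset.mem_range, Finset.mem_Icc]
    constructor
    · rintro ⟨r, hr, hv⟩
      by_cases hrF : r < F.length
      · have hv' : v ∈ (Finset.range F.length).image (qf F) :=
          Finset.mem_image.2 ⟨r, Finset.mem_range.2 hrF, (hQlow r hrF) ▸ hv⟩
        rw [hIH] at hv'
        rw [Finset.mem_Icc] at hv'
        omega
      · rw [hQhigh r (by omega) hr] at hv
        omega
    · rintro ⟨h1, h2⟩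
      by_cases hv : v < b + P.length
      · exact ⟨v - b, by omega, by rw [hQhigh _ (by omega) (by omega)]; omega⟩
      · have hv' : v ∈ Finset.Icc (b' + F.length - m') (b' + 2 * F.length - m' - 1) := by
          rw [Finset.mem_Icc]; omega
        rw [← hIH] at hv'
        obtain ⟨r, hr, hvr⟩ := Finset.mem_image.1 hv'
        rw [Finset.mem_range] at hr
        exact ⟨r, by omega, by rw [hQlow r hr]; exact hvr⟩

end Stmt16

namespace Stmt16

lemma diagLen_eq (P : List ℕ) (hpos : ∀ p ∈ P, 0 < p) (i : ℕ) :
    diagLen P i =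
      ((Finset.range (min (i + 1) P.length)).filter (fun r => i < qf P r)).card := by
  unfold diagLen
  apply congrArg Finset.card
  ext r
  rw [Finset.mem_filter, Finset.mem_filter]
  simp only [Finset.mem_filter, Finset.mem_range, lt_min_iff, qf]
  constructor
  · rintro ⟨h1, h2⟩
    have hr : r < P.length := by
      by_contra hr
      rw [List.getD_eq_default _ _ (le_of_not_gt hr)] at h2
      omega
    exact ⟨⟨h1, hr⟩, by omega⟩
  · rintro ⟨⟨h1, hr⟩, h2⟩
    refine ⟨h1, ?_⟩
    have hp : 0 < P.getD r 0 := by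
      rw [List.getD_eq_getElem _ _ hr]
      exact hpos _ (List.getElem_mem _)
    omega

lemma forward_bounds {P : List ℕ} {d k : ℕ} (hd : 1 ≤ d) (hk : 1 ≤ k)
    (hpos : ∀ p ∈ P, 0 < p) (hlen : P.length = d)
    (hdiag : ∀ i, diagLen P i = Tdk d k i) :
    ∀ r < d, d + k - 1 ≤ qf P r ∧ qf P r ≤ 2 * d + k - 2 := by
  have h1 := hdiag (d + k - 2)
  rw [diagLen_eq P hpos, hlen, min_eq_right (by omega)] at h1
  have hT1 : Tdk d k (d + k - 2) = d := by unfold Tdk; split <;> omega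
  rw [hT1] at h1
  have hall : ∀ r ∈ Finset.range d, d + k - 2 < qf P r := by
    have hsub := Finset.filter_subset (fun r => d + k - 2 < qf P r) (Finset.range d)
    have heq := Finset.eq_of_subset_of_card_le hsub (by rw [h1, Finset.card_range])
    intro r hr
    rw [← heq] at hr
    exact (Finset.mem_filter.1 hr).2
  have h2 := hdiag (2 * d + k - 2)
  rw [diagLen_eq P hpos, hlen, min_eq_right (by omega)] at h2
  have hT2 : Tdk d k (2 * d + k - 2) = 0 := by unfold Tdk; split <;> omega
  rw [hT2] at h2
  have hnone : ∀ r ∈ Finset.range d, ¬ (2 * d + k - 2 < qf P r) := by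
    intro r hr hlt
    have : r ∈ (Finset.range d).filter (fun r => 2 * d + k - 2 < qf P r) :=
      Finset.mem_filter.2 ⟨hr, hlt⟩
    rw [Finset.card_eq_zero.1 h2] at this
    simp at this
  intro r hr
  have ha := hall r (Finset.mem_range.2 hr)
  have hb := hnone r (Finset.mem_range.2 hr)
  omega

lemma backward_diag {P : List ℕ} {d k : ℕ} (hd : 1 ≤ d) (hk : 1 ≤ k)
    (hpos : ∀ p ∈ P, 0 < p) (hlen : P.length = d)
    (himg : (Finset.range d).image (qf P) = Finset.Icc (d + k - 1) (2 * d + k - 2)) :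
    ∀ i, diagLen P i = Tdk d k i := by
  have hinj : Set.InjOn (qf P) ↑(Finset.range d) :=
    Finset.injOn_of_card_image_eq (by rw [himg, Nat.card_Icc, Finset.card_range]; omega)
  have hbound : ∀ r < d, d + k - 1 ≤ qf P r ∧ qf P r ≤ 2 * d + k - 2 := by
    intro r hr
    have : qf P r ∈ Finset.Icc (d + k - 1) (2 * d + k - 2) := by
      rw [← himg]
      exact Finset.mem_image_of_mem _ (Finset.mem_range.2 hr)
    simpa [Finset.mem_Icc] using this
  intro i
  rw [diagLen_eq P hpos, hlen]
  by_cases hi : i < d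
  · rw [min_eq_left (by omega)]
    have hfil : Finset.filter (fun r => i < qf P r) (Finset.range (i + 1)) =
        Finset.range (i + 1) := by
      rw [Finset.filter_eq_self]
      intro r hr
      rw [Finset.mem_range] at hr
      have := hbound r (by omega)
      omega
    rw [hfil, Finset.card_range]
    unfold Tdk; split <;> omega
  · rw [min_eq_right (by omega)]
    have hkey : ((Finset.range d).filter (fun r => i < qf P r)).card =
        ((Finset.Icc (d + k - 1) (2 * d + k - 2)).filter (fun v => i < v)).card := by
      rw [← himg, Finset.filter_image,
        Finset.card_image_of_injOn (hinj.mono (Finset.coe_subset.2 (Finset.filter_subset _ _)))]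
    rw [hkey]
    have hfil : (Finset.Icc (d + k - 1) (2 * d + k - 2)).filter (fun v => i < v) =
        Finset.Icc (max (d + k - 1) (i + 1)) (2 * d + k - 2) := by
      ext v
      simp only [Finset.mem_filter, Finset.mem_Icc]
      omega
    rw [hfil, Nat.card_Icc]
    unfold Tdk; split <;> omega

lemma list_sum_getD (P : List ℕ) : P.sum = ∑ r ∈ Finset.range P.length, P.getD r 0 := by
  induction P with
  | nil => simp
  | cons a t ih =>
    rw [List.sum_cons, List.length_cons, Finset.sum_range_succ', ih]
    simp only [List.getD_cons_succ, List.getD_cons_zero]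
    omega

lemma backward_sum {P : List ℕ} {d k : ℕ} (hd : 1 ≤ d) (hk : 1 ≤ k)
    (hlen : P.length = d)
    (himg : (Finset.range d).image (qf P) = Finset.Icc (d + k - 1) (2 * d + k - 2)) :
    P.sum = d * (d + k - 1) := by
  have hinj : Set.InjOn (qf P) ↑(Finset.range d) :=
    Finset.injOn_of_card_image_eq (by rw [himg, Nat.card_Icc, Finset.card_range]; omega)
  have h1 : ∑ v ∈ Finset.Icc (d + k - 1) (2 * d + k - 2), v =
      ∑ r ∈ Finset.range d, qf P r := by
    rw [← himg]
    exact Finset.sum_image (fun x hx y hy h => hinj hx hy h)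
  have h2 : Finset.Icc (d + k - 1) (2 * d + k - 2) =
      (Finset.range d).image (fun j => (d + k - 1) + j) := by
    ext v
    simp only [Finset.mem_Icc, Finset.mem_image, Finset.mem_range]
    constructor
    · rintro ⟨ha, hb⟩
      exact ⟨v - (d + k - 1), by omega, by omega⟩
    · rintro ⟨j, hj, rfl⟩
      omega
  have h3 : ∑ v ∈ Finset.Icc (d + k - 1) (2 * d + k - 2), v =
      d * (d + k - 1) + ∑ r ∈ Finset.range d, r := by
    rw [h2, Finset.sum_image (by intro a _ c _ h; simp only at h; omega), Finset.sum_add_distrib,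
      Finset.sum_const, Finset.card_range, smul_eq_mul, mul_comm]
  have h4 : ∑ r ∈ Finset.range d, qf P r = P.sum + ∑ r ∈ Finset.range d, r := by
    unfold qf
    rw [Finset.sum_add_distrib, list_sum_getD, hlen]
  rw [h3, h4] at h1
  omega

lemma ciSet_eq (d k : ℕ) (hd : 1 ≤ d) (hk : 1 ≤ k) : ciSet d k d = ciSet' d k := by
  ext P
  constructor
  · rintro ⟨⟨hs, hpos⟩, hsum, hdiag, hci, hlen⟩
    have hne : P ≠ [] := by
      intro h
      rw [h] at hlen
      simp at hlen
      omega
    have hclaim := claimA P.length P rfl hs hpos hci hne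
    rw [hlen] at hclaim
    set b := minPart P with hbdef
    set m := P.count b with hmdef
    have hbmem : b ∈ P := minPart_mem hne
    have hm1 : 1 ≤ m := List.count_pos_iff.2 hbmem
    have hmle : m ≤ d := hlen ▸ List.count_le_length
    have hb1 : 1 ≤ b := hpos b hbmem
    have hbounds := forward_bounds hd hk hpos hlen hdiag
    have hsub : Finset.Icc (b + d - m) (b + 2 * d - m - 1) ⊆
        Finset.Icc (d + k - 1) (2 * d + k - 2) := by
      intro v hv
      rw [← hclaim] at hv
      obtain ⟨r, hr, rfl⟩ := Finset.mem_image.1 hv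
      rw [Finset.mem_range] at hr
      exact Finset.mem_Icc.2 ⟨(hbounds r hr).1, (hbounds r hr).2⟩
    have heq := Finset.eq_of_subset_of_card_le hsub
      (by rw [Nat.card_Icc, Nat.card_Icc]; omega)
    have e1 : (b + d - m) ∈ Finset.Icc (d + k - 1) (2 * d + k - 2) := by
      rw [← heq]
      exact Finset.mem_Icc.2 (by omega)
    have e2 : (d + k - 1) ∈ Finset.Icc (b + d - m) (b + 2 * d - m - 1) := by
      rw [heq]
      exact Finset.mem_Icc.2 (by omega)
    rw [Finset.mem_Icc] at e1 e2
    exact ⟨hs, hpos, hlen, hci, by rw [← hbdef, ← hmdef]; omega⟩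
  · rintro ⟨hs, hpos, hlen, hci, hmc⟩
    have hne : P ≠ [] := by
      intro h
      rw [h] at hlen
      simp at hlen
      omega
    have hclaim := claimA P.length P rfl hs hpos hci hne
    rw [hlen] at hclaim
    set b := minPart P with hbdef
    set m := P.count b with hmdef
    have hbmem : b ∈ P := minPart_mem hne
    have hm1 : 1 ≤ m := List.count_pos_iff.2 hbmem
    have hmle : m ≤ d := hlen ▸ List.count_le_length
    have himg : (Finset.range d).image (qf P) = Finset.Icc (d + k - 1) (2 * d + k - 2) := by
      rw [hclaim, show b + d - m = d + k - 1 from by omega,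
        show b + 2 * d - m - 1 = 2 * d + k - 2 from by omega]
    exact ⟨⟨hs, hpos⟩, backward_sum hd hk hlen himg, backward_diag hd hk hpos hlen himg,
      hci, hlen⟩

end Stmt16

namespace Stmt16

lemma step_bij (d' m k : ℕ) (hd' : 1 ≤ d') (hm : 1 ≤ m) (hk : 1 ≤ k) :
    {P | P ∈ ciSet' (d' + m) k ∧ minPart P = m + k - 1} =
      (fun F => F ++ List.replicate m (m + k - 1)) '' (ciSet' d' (k + 2 * m)) := by
  set b := m + k - 1 with hb
  ext P
  simp only [Set.mem_setOf_eq, Set.mem_image]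
  constructor
  · rintro ⟨⟨hs, hpos, hlen, hci, hmc⟩, hmin⟩
    have hne : P ≠ [] := by
      intro h; rw [h] at hlen; simp at hlen; omega
    rw [hmin] at hmc
    have hcount : P.count b = m := by omega
    obtain ⟨hdecomp, hgt⟩ := suffix_decomp P hs hne
    rw [hmin, hcount] at hdecomp hgt
    set F := P.take (P.length - m) with hFdef
    have hFlen : F.length = d' := by
      rw [hFdef, List.length_take, hlen]; omega
    have hFne : F ≠ [] := by
      intro h; rw [h] at hFlen; simp at hFlen; omega
    have hFmem : ∀ x ∈ F, x ∈ P := fun x hx => hdecomp ▸ (List.mem_append_left _ hx)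
    have hsF : F.Pairwise (· ≥ ·) := List.Pairwise.sublist (List.take_sublist _ _) hs
    have hposF : ∀ p ∈ F, 0 < p := fun p hp => hpos p (hFmem p hp)
    have hciF : CICriterion F := CI_of_append hgt (hdecomp ▸ hci)
    set b' := minPart F with hb'def
    have hb'F : b' ∈ F := minPart_mem hFne
    have hbb' : b < b' := hgt _ hb'F
    have hcountb' : P.count b' = F.count b' := by
      have h1 : P.count b' = F.count b' + (List.replicate m b).count b' := by
        conv_lhs => rw [hdecomp]
        rw [List.count_append]
      rw [h1, List.count_replicate, if_neg (by simp; omega), add_zero]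
    have hlink : b' = F.count b' + m + b := by
      have h := hci b' b (hFmem _ hb'F) ?_ ?_ ?_
      · rw [hcountb', hcount] at h
        omega
      · rw [hdecomp]
        exact List.mem_append_right _ (by simp [List.mem_replicate]; omega)
      · omega
      · intro z hz
        rcases List.mem_append.1 (hdecomp ▸ hz) with hzF | hzr
        · right; exact minPart_le hsF z hzF
        · left; have := List.eq_of_mem_replicate hzr; omega
    refine ⟨F, ⟨hsF, hposF, hFlen, hciF, ?_⟩, hdecomp.symm⟩
    rw [← hb'def]
    omega
  · rintro ⟨F, ⟨hsF, hposF, hlenF, hciF, hmcF⟩, rfl⟩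
    have hFne : F ≠ [] := by
      intro h; rw [h] at hlenF; simp at hlenF; omega
    have hmF1 : 1 ≤ F.count (minPart F) := List.count_pos_iff.2 (minPart_mem hFne)
    have hgt : ∀ x ∈ F, b < x := by
      intro x hx
      have h1 := minPart_le hsF x hx
      omega
    have hsrep : (List.replicate m b).Pairwise (· ≥ ·) :=
      List.pairwise_replicate.2 (Or.inr le_rfl)
    have hsP : (F ++ List.replicate m b).Pairwise (· ≥ ·) := by
      rw [List.pairwise_append]
      refine ⟨hsF, hsrep, ?_⟩
      intro x hx y hy
      have := List.eq_of_mem_replicate hy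
      have := hgt x hx
      omega
    have hcb : F.count b = 0 := List.count_eq_zero.2 (fun h => by have := hgt b h; omega)
    have hminP : minPart (F ++ List.replicate m b) = b := minPart_append hm
    refine ⟨⟨hsP, ?_, ?_, ?_, ?_⟩, hminP⟩
    · intro p hp
      rcases List.mem_append.1 hp with h | h
      · exact hposF p h
      · have := List.eq_of_mem_replicate h; omega
    · rw [List.length_append, List.length_replicate, hlenF]
    · exact CI_append hsF hFne hgt hciF (by omega)
    · rw [hminP, List.count_append, List.count_replicate, if_pos (by simp), hcb, zero_add]
      omega

lemma rect_lemma (d k : ℕ) (hd : 1 ≤ d) (hk : 1 ≤ k) :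
    {P | P ∈ ciSet' d k ∧ minPart P = d + k - 1} = {List.replicate d (d + k - 1)} := by
  ext P
  simp only [Set.mem_setOf_eq, Set.mem_singleton_iff]
  constructor
  · rintro ⟨⟨hs, hpos, hlen, hci, hmc⟩, hmin⟩
    have hne : P ≠ [] := by
      intro h; rw [h] at hlen; simp at hlen; omega
    rw [hmin] at hmc
    have hmle : P.count (d + k - 1) ≤ d := hlen ▸ List.count_le_length
    have hcount : P.count (d + k - 1) = P.length := by rw [hlen]; omega
    exact List.eq_replicate_iff.2 ⟨hlen,
      fun x hx => ((List.count_eq_length.1 hcount) x hx).symm⟩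
  · rintro rfl
    have hminP : minPart (List.replicate d (d + k - 1)) = d + k - 1 := by
      unfold minPart
      exact getLastD_replicate _ d hd
    refine ⟨⟨?_, ?_, ?_, ?_, ?_⟩, hminP⟩
    · exact List.pairwise_replicate.2 (Or.inr le_rfl)
    · intro p hp
      have := List.eq_of_mem_replicate hp
      omega
    · simp
    · intro x y hx hy hlt _
      have hx' := List.eq_of_mem_replicate hx
      have hy' := List.eq_of_mem_replicate hy
      omega
    · rw [hminP, List.count_replicate, if_pos (by simp)]
      omega

lemma union_decomp (d k : ℕ) (hd : 1 ≤ d) :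
    ciSet' d k = ⋃ a ∈ Finset.range d, {P | P ∈ ciSet' d k ∧ minPart P = a + k} := by
  ext P
  simp only [Set.mem_iUnion, Finset.mem_range, Set.mem_setOf_eq, exists_prop]
  constructor
  · intro hP
    obtain ⟨hs, hpos, hlen, hci, hmc⟩ := hP
    have hne : P ≠ [] := by
      intro h; rw [h] at hlen; simp at hlen; omega
    have hm1 : 1 ≤ P.count (minPart P) := List.count_pos_iff.2 (minPart_mem hne)
    have hmle : P.count (minPart P) ≤ d := hlen ▸ List.count_le_length
    exact ⟨P.count (minPart P) - 1, by omega, ⟨hs, hpos, hlen, hci, hmc⟩, by omega⟩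
  · rintro ⟨a, _, hP, _⟩
    exact hP

lemma finite_ncard_union (S : ℕ → Set (List ℕ)) :
    ∀ n, (∀ a, a < n → (S a).Finite) →
      (∀ a b, a < n → b < n → a ≠ b → Disjoint (S a) (S b)) →
      (⋃ a ∈ Finset.range n, S a).Finite ∧
        (⋃ a ∈ Finset.range n, S a).ncard = ∑ a ∈ Finset.range n, (S a).ncard := by
  intro n
  induction n with
  | zero => intro _ _; simp
  | succ n ih =>
    intro hfin hdisj
    have hu : (⋃ a ∈ Finset.range (n + 1), S a) = (⋃ a ∈ Finset.range n, S a) ∪ S n := by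
      ext x
      simp only [Set.mem_iUnion, Finset.mem_range, Set.mem_union, exists_prop]
      constructor
      · rintro ⟨a, ha, hx⟩
        rcases Nat.lt_succ_iff_lt_or_eq.1 ha with h | rfl
        · exact Or.inl ⟨a, h, hx⟩
        · exact Or.inr hx
      · rintro (⟨a, ha, hx⟩ | hx)
        · exact ⟨a, by omega, hx⟩
        · exact ⟨n, by omega, hx⟩
    obtain ⟨ih1, ih2⟩ := ih (fun a ha => hfin a (by omega))
      (fun a b ha hb => hdisj a b (by omega) (by omega))
    have hdis : Disjoint (⋃ a ∈ Finset.range n, S a) (S n) := by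
      rw [Set.disjoint_left]
      intro x hx hxn
      simp only [Set.mem_iUnion, Finset.mem_range, exists_prop] at hx
      obtain ⟨a, ha, hxa⟩ := hx
      exact (Set.disjoint_left.1 (hdisj a n (by omega) (by omega) (by omega)) hxa) hxn
    rw [hu]
    refine ⟨ih1.union (hfin n (by omega)), ?_⟩
    rw [Set.ncard_union_eq hdis ih1 (hfin n (by omega)), ih2, Finset.sum_range_succ]

lemma geom_sum (n : ℕ) : ∑ j ∈ Finset.range n, 2 ^ j = 2 ^ n - 1 := by
  induction n with
  | zero => simp
  | succ n ih =>
    rw [Finset.sum_range_succ, ih]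
    have : 1 ≤ 2 ^ n := Nat.one_le_two_pow
    ring_nf
    omega

lemma master : ∀ d, 1 ≤ d → ∀ k, 1 ≤ k →
    (ciSet' d k).Finite ∧ (ciSet' d k).ncard = 2 ^ (d - 1) := by
  intro d
  induction d using Nat.strong_induction_on with
  | _ d ih =>
  intro hd k hk
  rcases eq_or_lt_of_le hd with h1 | h2
  · -- d = 1
    have hone : ciSet' 1 k = {[k]} := by
      ext P
      simp only [Set.mem_singleton_iff]
      constructor
      · rintro ⟨hs, hpos, hlen, hci, hmc⟩
        obtain ⟨p, rfl⟩ := List.length_eq_one_iff.1 hlen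
        have h1 : minPart [p] = p := rfl
        have h2 : List.count p [p] = 1 := by simp
        rw [h1, h2] at hmc
        have : p = k := by omega
        rw [this]
      · rintro rfl
        refine ⟨by simp, by simp; omega, by simp, ?_, ?_⟩
        · intro x y hx hy hlt _
          simp at hx hy
          omega
        · have h1 : minPart [k] = k := rfl
          rw [h1]
          simp
          omega
    rw [← h1, hone]
    exact ⟨Set.finite_singleton _, by simp⟩
  · -- d ≥ 2
    set S : ℕ → Set (List ℕ) := fun a => {P | P ∈ ciSet' d k ∧ minPart P = a + k} with hS
    have hdisj : ∀ a b, a < d → b < d → a ≠ b → Disjoint (S a) (S b) := by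
      intro a b _ _ hab
      rw [Set.disjoint_left]
      rintro P ⟨_, hh1⟩ ⟨_, hh2⟩
      omega
    have hSa : ∀ a, a < d - 1 → (S a).Finite ∧ (S a).ncard = 2 ^ (d - 2 - a) := by
      intro a ha
      have hbij := step_bij (d - 1 - a) (a + 1) k (by omega) (by omega) hk
      rw [show (a + 1) + k - 1 = a + k from by omega,
        show (d - 1 - a) + (a + 1) = d from by omega] at hbij
      obtain ⟨hf, hc⟩ := ih (d - 1 - a) (by omega) (by omega) (k + 2 * (a + 1)) (by omega)
      rw [hS]
      simp only []
      rw [hbij]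
      refine ⟨hf.image _, ?_⟩
      rw [Set.ncard_image_of_injOn (fun x _ y _ h => List.append_cancel_right h), hc]
      congr 1
      omega
    have hrect : S (d - 1) = {List.replicate d (d + k - 1)} := by
      rw [hS]
      simp only []
      rw [show (d - 1) + k = d + k - 1 from by omega]
      exact rect_lemma d k hd hk
    have hfin : ∀ a, a < d → (S a).Finite := by
      intro a ha
      rcases lt_or_ge a (d - 1) with h | h
      · exact (hSa a h).1
      · have : a = d - 1 := by omega
        rw [this, hrect]
        exact Set.finite_singleton _
    obtain ⟨hUf, hUc⟩ := finite_ncard_union S d hfin hdisj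
    rw [← union_decomp d k hd] at hUf hUc
    refine ⟨hUf, ?_⟩
    rw [hUc, show d = (d - 1) + 1 from by omega, Finset.sum_range_succ,
      show (d - 1) + 1 - 1 = d - 1 from by omega, hrect, Set.ncard_singleton]
    have hsum : ∑ a ∈ Finset.range (d - 1), (S a).ncard =
        ∑ a ∈ Finset.range (d - 1), 2 ^ (d - 2 - a) := by
      refine Finset.sum_congr rfl (fun a ha => ?_)
      exact (hSa a (Finset.mem_range.1 ha)).2
    rw [hsum]
    have href : ∑ a ∈ Finset.range (d - 1), 2 ^ (d - 2 - a) =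
        ∑ a ∈ Finset.range (d - 1), 2 ^ a := by
      rw [← Finset.sum_range_reflect (fun j => 2 ^ j) (d - 1)]
      refine Finset.sum_congr rfl (fun a ha => ?_)
      rw [Finset.mem_range] at ha
      have hexp : d - 1 - 1 - a = d - 2 - a := by omega
      rw [hexp]
    rw [href, geom_sum]
    have : 1 ≤ 2 ^ (d - 1) := Nat.one_le_two_pow
    omega

end Stmt16


/-- counts of CIJT partitions with `d` parts and given smallest
part. For `0 ≤ a ≤ d-2` there are `2^(d-2-a)` CIJT partitions with `d` parts
and smallest part `a + k`; and the only one with smallest part `d + k - 1` is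
the rectangle `(d+k-1)^d`. -/
theorem stmt_16 (d k : ℕ) (hd : 2 ≤ d) (hk : 1 ≤ k) :
    (∀ a : ℕ, a ≤ d - 2 →
      {P ∈ ciSet d k d | minPart P = a + k}.ncard = 2 ^ (d - 2 - a)) ∧
    {P ∈ ciSet d k d | minPart P = d + k - 1} =
      {List.replicate d (d + k - 1)} := by
  have hE := Stmt16.ciSet_eq d k (by omega) hk
  constructor
  · intro a ha
    have h1 : {P ∈ ciSet d k d | minPart P = a + k} =
        {P | P ∈ Stmt16.ciSet' d k ∧ minPart P = a + k} := by
      ext P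
      simp only [Set.mem_sep_iff, Set.mem_setOf_eq, hE]
    rw [h1]
    have hbij := Stmt16.step_bij (d - 1 - a) (a + 1) k (by omega) (by omega) hk
    rw [show (a + 1) + k - 1 = a + k from by omega,
      show (d - 1 - a) + (a + 1) = d from by omega] at hbij
    rw [hbij, Set.ncard_image_of_injOn (fun x _ y _ h => List.append_cancel_right h),
      (Stmt16.master (d - 1 - a) (by omega) (k + 2 * (a + 1)) (by omega)).2]
    have hexp : d - 1 - a - 1 = d - 2 - a := by omega
    rw [hexp]
  · have h1 : {P ∈ ciSet d k d | minPart P = d + k - 1} =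
        {P | P ∈ Stmt16.ciSet' d k ∧ minPart P = d + k - 1} := by
      ext P
      simp only [Set.mem_sep_iff, Set.mem_setOf_eq, hE]
    rw [h1]
    exact Stmt16.rect_lemma d k (by omega) hk
end

section
/- Let d ≥ 2 and k ≥ 1 be integers, and set D = d if k ≥ 2 and D = d−1 if k = 1. The map sending a partition P = (p_1 ≥ p_2 ≥ …) to the set {i ∈ {0, 1, …, D−1} : p_1 + ⋯ + p_{i+1} = (i+1)(2d+k−2−i)} (parts beyond the length of P taken to be 0) is a bijection from the set of partitions of d(d+k−1) having diagonal lengths T(d,k) and satisfying the CI criterion onto the set of all subsets of {0, 1, …, D−1}; in particular there are exactly 2^D such partitions. -/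
open MvPolynomial

namespace S18

/-- rows with q-value `> i`, with row offset `off`. -/
def qc (i : ℕ) : ℕ → List ℕ → ℕ
  | _, [] => 0
  | off, a :: P => (if i < a + off then 1 else 0) + qc i (off + 1) P

/-- diagonal length, recursively, with row offset. -/
def dl (i : ℕ) : ℕ → List ℕ → ℕ
  | _, [] => 0
  | off, a :: P => (if off ≤ i ∧ i < a + off then 1 else 0) + dl i (off + 1) P

lemma dl_zero (off : ℕ) (P : List ℕ) (h : 0 < off) : dl 0 off P = 0 := by
  induction P generalizing off with
  | nil => rfl
  | cons a P ih => simp [dl, ih (off+1) (by omega), Nat.not_succ_le_zero]; omega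

lemma dl_shift (i off : ℕ) (P : List ℕ) : dl (i+1) (off+1) P = dl i off P := by
  induction P generalizing off with
  | nil => rfl
  | cons a P ih =>
    simp only [dl, ih]
    congr 1
    split_ifs with h1 h2 h2 <;> omega

lemma diagLen_cons (a : ℕ) (P : List ℕ) (i : ℕ) :
    diagLen (a :: P) i = (if i < a then 1 else 0) + (if i = 0 then 0 else diagLen P (i-1)) := by
  rw [diagLen, Finset.card_filter, Finset.sum_range_succ']
  simp only [List.getD_cons_zero, List.getD_cons_succ, Nat.sub_zero]
  rcases Nat.eq_zero_or_pos i with h | h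
  · subst h; simp
  · obtain ⟨j, rfl⟩ : ∃ j, i = j + 1 := ⟨i - 1, by omega⟩
    rw [if_neg (show ¬(j+1=0) by omega)]
    have h2 : ∀ r, j + 1 - (r + 1) = j - r := fun r => by omega
    simp only [h2]
    rw [diagLen, Finset.card_filter]
    exact add_comm _ _

lemma diagLen_eq_dl (P : List ℕ) (i : ℕ) : diagLen P i = dl i 0 P := by
  induction P generalizing i with
  | nil => simp [diagLen, dl]
  | cons a P ih =>
    rw [diagLen_cons]
    simp only [dl]
    rcases Nat.eq_zero_or_pos i with h | h
    · subst h
      rw [dl_zero _ _ (by omega)]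
      split_ifs <;> omega
    · obtain ⟨j, rfl⟩ : ∃ j, i = j + 1 := ⟨i - 1, by omega⟩
      rw [dl_shift, ← ih]
      have h2 : (if j + 1 = 0 then 0 else diagLen P (j+1-1)) = diagLen P j := by simp
      rw [h2]
      split_ifs <;> omega

lemma qc_eq_dl (i off : ℕ) (P : List ℕ) (hpos : ∀ x ∈ P, 0 < x) :
    qc i off P = dl i off P + (P.length - ((i+1) - off)) := by
  induction P generalizing off with
  | nil => simp [qc, dl]
  | cons a P ih =>
    have ha : 0 < a := hpos a (by simp)
    have ih' := ih (off+1) (fun x hx => hpos x (by simp [hx]))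
    simp only [qc, dl, ih', List.length_cons]
    split_ifs <;> omega


def build : ℕ → List ℕ → List ℕ
  | _, [] => []
  | V, n :: L => List.replicate n (V - n) ++ build (V - 2*n) L

def Valid (V : ℕ) (L : List ℕ) : Prop :=
  (∀ n ∈ L, 0 < n) ∧ ∀ j, j + 1 ≤ L.length → (L.take j).sum + (L.take (j+1)).sum < V

lemma valid_nil (V : ℕ) : Valid V [] := ⟨by simp, by simp⟩

lemma Valid.pos_head {V n : ℕ} {L : List ℕ} (h : Valid V (n :: L)) : 0 < n :=
  h.1 n (by simp)

lemma Valid.head_lt {V n : ℕ} {L : List ℕ} (h : Valid V (n :: L)) : n < V := by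
  have := h.2 0 (by simp)
  simpa using this

lemma Valid.tail {V n : ℕ} {L : List ℕ} (h : Valid V (n :: L)) : Valid (V - 2*n) L := by
  refine ⟨fun m hm => h.1 m (by simp [hm]), fun j hj => ?_⟩
  have := h.2 (j+1) (by simpa using hj)
  simp only [List.take_succ_cons, List.sum_cons] at this
  omega

lemma take_sum_le (L : List ℕ) (j : ℕ) : (L.take j).sum ≤ L.sum := by
  conv_rhs => rw [← List.take_append_drop j L]
  rw [List.sum_append]; omega

lemma Valid.bound {V n : ℕ} {L : List ℕ} (h : Valid V (n :: L)) (hne : L ≠ []) :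
    2*n + L.sum < V := by
  cases L with
  | nil => simp at hne
  | cons m L' =>
    have := h.2 (L'.length + 1) (by simp)
    simp only [List.take_succ_cons, List.sum_cons] at this
    rw [show L'.length = List.length L' from rfl, List.take_length] at this
    have h2 : (List.take L'.length (m :: L')).sum ≤ (m :: L').sum := take_sum_le _ _
    simp only [List.sum_cons] at this h2 ⊢
    omega

lemma valid_cons {W : ℕ} {L : List ℕ} (h : Valid W L) (n : ℕ) (hn : 0 < n) :
    Valid (W + 2*n) (n :: L) := by
  refine ⟨fun m hm => ?_, fun j hj => ?_⟩
  · rcases List.mem_cons.1 hm with rfl | hm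
    · exact hn
    · exact h.1 m hm
  · cases j with
    | zero => simp; omega
    | succ j' =>
      have := h.2 j' (by simpa using hj)
      simp only [List.take_succ_cons, List.sum_cons]
      omega

lemma length_build (V : ℕ) (L : List ℕ) : (build V L).length = L.sum := by
  induction L generalizing V with
  | nil => rfl
  | cons n L ih => simp [build, ih]

lemma mem_build_lt {V : ℕ} {L : List ℕ} (h : Valid V L) : ∀ x ∈ build V L, x < V := by
  induction L generalizing V with
  | nil => simp [build]
  | cons n L ih =>
    intro x hx
    rcases List.mem_append.1 hx with hx | hx
    · have := List.eq_of_mem_replicate hx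
      have := h.head_lt
      have := h.pos_head
      omega
    · have := ih h.tail x hx
      omega

lemma pos_build {V : ℕ} {L : List ℕ} (h : Valid V L) : ∀ x ∈ build V L, 0 < x := by
  induction L generalizing V with
  | nil => simp [build]
  | cons n L ih =>
    intro x hx
    rcases List.mem_append.1 hx with hx | hx
    · have := List.eq_of_mem_replicate hx
      have := h.head_lt
      omega
    · exact ih h.tail x hx

lemma sorted_replicate (n a : ℕ) : (List.replicate n a).Pairwise (· ≥ ·) := by
  induction n with
  | zero => simp
  | succ n ih =>
    rw [List.replicate_succ, List.pairwise_cons]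
    exact ⟨fun b hb => le_of_eq (List.eq_of_mem_replicate hb), ih⟩

lemma sorted_build {V : ℕ} {L : List ℕ} (h : Valid V L) : (build V L).Pairwise (· ≥ ·) := by
  induction L generalizing V with
  | nil => simp [build]
  | cons n L ih =>
    rw [build, List.pairwise_append]
    refine ⟨sorted_replicate _ _, ih h.tail, fun a ha b hb => ?_⟩
    have ha := List.eq_of_mem_replicate ha
    have hb := mem_build_lt h.tail b hb
    subst ha
    omega

lemma count_head_build {V n : ℕ} {L : List ℕ} (h : Valid V (n :: L)) :
    (build V (n :: L)).count (V - n) = n := by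
  rw [build, List.count_append, List.count_replicate_self]
  have : (build (V - 2*n) L).count (V - n) = 0 := by
    rw [List.count_eq_zero]
    intro hmem
    have := mem_build_lt h.tail _ hmem
    have := h.pos_head
    have := h.head_lt
    omega
  omega

lemma CI_build {V : ℕ} {L : List ℕ} (h : Valid V L) : CICriterion (build V L) := by
  induction L generalizing V with
  | nil => intro a b ha; simp [build] at ha
  | cons n L ih =>
    intro a b ha hb hlt hgap
    have hn := h.pos_head
    have hnV := h.head_lt
    have hbB : b ∈ build (V - 2*n) L := by
      rcases List.mem_append.1 hb with hb' | hb'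
      · exfalso
        have hb' := List.eq_of_mem_replicate hb'
        rcases List.mem_append.1 ha with ha' | ha'
        · have := List.eq_of_mem_replicate ha'; omega
        · have := mem_build_lt h.tail a ha'; omega
      · exact hb'
    rcases List.mem_append.1 ha with ha' | ha'
    · -- a = V - n, head block
      have haeq := List.eq_of_mem_replicate ha'
      subst haeq
      cases L with
      | nil => simp [build] at hbB
      | cons m L' =>
        have hm : 0 < m := h.tail.pos_head
        have hmV : m < V - 2*n := h.tail.head_lt
        set q := (V - 2*n) - m with hq
        have hqmem : q ∈ build V (n :: (m :: L')) := by
          rw [build]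
          refine List.mem_append.2 (Or.inr ?_)
          rw [build]
          exact List.mem_append.2 (Or.inl (by simp [hq]; omega))
        have hbq : b = q := by
          have h1 := hgap q hqmem
          have hble : b ≤ q := by
            rcases List.mem_append.1 (show b ∈ List.replicate m ((V - 2*n) - m) ++
                build ((V - 2*n) - 2*m) L' from by rwa [build] at hbB) with hb2 | hb2
            · have := List.eq_of_mem_replicate hb2; omega
            · have := mem_build_lt h.tail.tail b hb2; omega
          omega
        subst hbq
        have hc1 : (build V (n :: (m :: L'))).count (V - n) = n := count_head_build h
        have hc2 : (build V (n :: (m :: L'))).count q = m := by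
          rw [build, List.count_append, List.count_replicate,
            if_neg (by simp only [beq_iff_eq]; omega), count_head_build h.tail]
          omega
        rw [hc1, hc2]
        have hqpos : 0 < q := pos_build h.tail _ (by
          rw [build]; exact List.mem_append.2 (Or.inl (by simp [hq]; omega)))
        omega
    · -- a in deeper part
      have haV : a < V - 2*n := mem_build_lt h.tail a ha'
      have key := ih h.tail a b ha' hbB hlt (fun x hx => hgap x (by
        rw [build]; exact List.mem_append.2 (Or.inr hx)))
      have hca : (build V (n :: L)).count a = (build (V - 2*n) L).count a := by
        rw [build, List.count_append, List.count_replicate, if_neg (by simp only [beq_iff_eq]; omega)]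
        omega
      have hcb : (build V (n :: L)).count b = (build (V - 2*n) L).count b := by
        have hbV : b < V - 2*n := mem_build_lt h.tail b hbB
        rw [build, List.count_append, List.count_replicate, if_neg (by simp only [beq_iff_eq]; omega)]
        omega
      rw [hca, hcb]
      exact key


lemma qc_append (i off : ℕ) (X Y : List ℕ) :
    qc i off (X ++ Y) = qc i off X + qc i (off + X.length) Y := by
  induction X generalizing off with
  | nil => simp [qc]
  | cons a X ih =>
    rw [List.cons_append]
    show (if i < a + off then 1 else 0) + qc i (off+1) (X ++ Y) = _
    rw [ih (off+1)]
    show _ = (if i < a + off then 1 else 0) + qc i (off+1) X + qc i (off + (X.length + 1)) Y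
    rw [show off + (X.length + 1) = off + 1 + X.length from by omega]
    exact (Nat.add_assoc _ _ _).symm

lemma qc_replicate (i off n p : ℕ) : qc i off (List.replicate n p) = n - (i + 1 - (p + off)) := by
  induction n generalizing off with
  | zero => simp [qc]
  | succ n ih =>
    rw [List.replicate_succ, qc, ih (off + 1)]
    split_ifs <;> omega

lemma sum_pos_of_ne_nil {V : ℕ} {L : List ℕ} (h : Valid V L) (hne : L ≠ []) : 0 < L.sum := by
  cases L with
  | nil => simp at hne
  | cons m t =>
    have := h.pos_head
    simp only [List.sum_cons]
    omega

lemma qc_build {V : ℕ} {L : List ℕ} (h : Valid V L) (i off : ℕ) :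
    qc i off (build V L) = min L.sum (V - 1 + off - i) := by
  induction L generalizing V off with
  | nil => simp [build, qc]
  | cons n L ih =>
    rw [build, qc_append, qc_replicate, List.length_replicate, ih h.tail]
    have hn := h.pos_head
    have hnV := h.head_lt
    rcases eq_or_ne L [] with rfl | hne
    · simp only [List.sum_cons, List.sum_nil]
      omega
    · have hb := h.bound hne
      have hs : 0 < L.sum := sum_pos_of_ne_nil h.tail hne
      simp only [List.sum_cons]
      omega

lemma split_identity {V n m' : ℕ} (h1 : 2*n + m' ≤ V) :
    n*(V-n) + m'*((V-2*n) - m') = (n+m') * (V - (n+m')) := by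
  zify [show n ≤ V by omega, show m' ≤ V - 2*n by omega, show n + m' ≤ V by omega,
    show 2*n ≤ V by omega]
  ring

lemma take_build_ps {V : ℕ} {L : List ℕ} (h : Valid V L) (j : ℕ) :
    ((build V L).take ((L.take j).sum)).sum = (L.take j).sum * (V - (L.take j).sum) := by
  induction L generalizing V j with
  | nil => simp
  | cons n L ih =>
    cases j with
    | zero => simp
    | succ j' =>
      simp only [List.take_succ_cons, List.sum_cons]
      rw [build, show n + (L.take j').sum = (List.replicate n (V - n)).length + (L.take j').sum
          from by simp, List.take_length_add_append, List.sum_append, List.sum_replicate, smul_eq_mul,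
        ih h.tail j']
      simp only [List.length_replicate]
      rcases Nat.eq_zero_or_pos ((L.take j').sum) with hz | hpos
      · simp [hz]
      · have hne : L ≠ [] := by
          intro hL; rw [hL] at hpos; simp at hpos
        have hb := h.bound hne
        have hle : (L.take j').sum ≤ L.sum := take_sum_le _ _
        exact split_identity (V := V) (n := n) (m' := (L.take j').sum) (by omega)

lemma take_build_lt {V : ℕ} {L : List ℕ} (h : Valid V L) (m : ℕ) (hm : 0 < m)
    (hms : m ≤ L.sum) (hnps : ∀ j, (L.take j).sum ≠ m) :
    ((build V L).take m).sum < m * (V - m) := by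
  induction L generalizing V m with
  | nil => simp at hms; omega
  | cons n L ih =>
    have hn := h.pos_head
    have hnV := h.head_lt
    rcases lt_trichotomy m n with hc | hc | hc
    · rw [build, List.take_append_of_le_length (by simp; omega),
        List.take_replicate, List.sum_replicate]
      simp only [smul_eq_mul, min_eq_left (le_of_lt hc)]
      have h2 : V - n < V - m := by omega
      exact mul_lt_mul_of_pos_left h2 hm
    · exact absurd (by simp [← hc] : ((n :: L).take 1).sum = m) (hnps 1)
    · have hne : L ≠ [] := by
        intro hL
        rw [hL] at hms; simp at hms; omega
      have hb := h.bound hne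
      simp only [List.sum_cons] at hms
      have key := ih h.tail (m - n) (by omega) (by omega)
        (fun j hj => hnps (j+1) (by simp [hj]; omega))
      rw [build, show m = (List.replicate n (V - n)).length + (m - n) from by simp; omega,
        List.take_length_add_append, List.sum_append, List.sum_replicate, smul_eq_mul]
      simp only [List.length_replicate]
      rw [show n + (m - n) = m from by omega]
      have hid := split_identity (V := V) (n := n) (m' := m - n) (by omega)
      rw [show n + (m - n) = m from by omega] at hid
      omega

def IsPS (L : List ℕ) (m : ℕ) : Prop := ∃ j, (L.take j).sum = m

lemma isPS_zero (L : List ℕ) : IsPS L 0 := ⟨0, rfl⟩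

lemma isPS_sum (L : List ℕ) : IsPS L L.sum := ⟨L.length, by rw [List.take_length]⟩

lemma isPS_le {L : List ℕ} {m : ℕ} (h : IsPS L m) : m ≤ L.sum := by
  obtain ⟨j, rfl⟩ := h
  exact take_sum_le _ _

lemma isPS_cons {n m : ℕ} {L : List ℕ} :
    IsPS (n :: L) m ↔ m = 0 ∨ ∃ m', IsPS L m' ∧ m = n + m' := by
  constructor
  · rintro ⟨j, hj⟩
    cases j with
    | zero => exact Or.inl hj.symm
    | succ j' =>
      right
      refine ⟨(L.take j').sum, ⟨j', rfl⟩, ?_⟩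
      simp only [List.take_succ_cons, List.sum_cons] at hj
      omega
  · rintro (rfl | ⟨m', ⟨j, rfl⟩, rfl⟩)
    · exact isPS_zero _
    · exact ⟨j + 1, by simp⟩

lemma comp_eq_of_ps : ∀ (L L' : List ℕ), (∀ n ∈ L, 0 < n) → (∀ n ∈ L', 0 < n) →
    (∀ m, IsPS L m ↔ IsPS L' m) → L = L'
  | [], [], _, _, _ => rfl
  | [], n' :: t', _, hL', h => by
    exfalso
    have h1 : IsPS (n' :: t') n' := ⟨1, by simp⟩
    obtain ⟨j, hj⟩ := (h n').2 h1
    simp at hj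
    have := hL' n' (by simp)
    omega
  | n :: t, [], hL, _, h => by
    exfalso
    have h1 : IsPS (n :: t) n := ⟨1, by simp⟩
    obtain ⟨j, hj⟩ := (h n).1 h1
    simp at hj
    have := hL n (by simp)
    omega
  | n :: t, n' :: t', hL, hL', h => by
    have hn : 0 < n := hL n (by simp)
    have hn' : 0 < n' := hL' n' (by simp)
    have hnn : n = n' := by
      have h1 := (h n).1 ⟨1, by simp⟩
      have h2 := (h n').2 ⟨1, by simp⟩
      rcases isPS_cons.1 h1 with h1' | ⟨m1, _, hm1⟩
      · omega
      · rcases isPS_cons.1 h2 with h2' | ⟨m2, _, hm2⟩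
        · omega
        · omega
    subst hnn
    have htail : ∀ m, IsPS t m ↔ IsPS t' m := by
      intro m
      constructor
      · intro hm
        have := (h (n + m)).1 (isPS_cons.2 (Or.inr ⟨m, hm, rfl⟩))
        rcases isPS_cons.1 this with h' | ⟨m', hm', he⟩
        · omega
        · have : m = m' := by omega
          exact this ▸ hm'
      · intro hm
        have := (h (n + m)).2 (isPS_cons.2 (Or.inr ⟨m, hm, rfl⟩))
        rcases isPS_cons.1 this with h' | ⟨m', hm', he⟩
        · omega
        · have : m = m' := by omega
          exact this ▸ hm'
    rw [comp_eq_of_ps t t' (fun x hx => hL x (by simp [hx]))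
      (fun x hx => hL' x (by simp [hx])) htail]


def comp : List ℕ → List ℕ
  | [] => []
  | a :: P =>
    ((a :: P).count a) :: comp ((a :: P).drop ((a :: P).count a))
  termination_by P => P.length
  decreasing_by
    simp only [List.length_drop]
    have h1 : 0 < (a :: P).count a := by
      simp [List.count_cons_self]
    simp only [List.length_cons]
    omega

lemma sorted_block : ∀ (P : List ℕ), P.Pairwise (· ≥ ·) → ∀ p, (∀ x ∈ P, x ≤ p) →
    P = List.replicate (P.count p) p ++ P.drop (P.count p) ∧
    ∀ x ∈ P.drop (P.count p), x < p := by
  intro P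
  induction P with
  | nil => simp
  | cons a P ih =>
    intro hs p hb
    rcases eq_or_ne a p with rfl | hne
    · have hcount : (a :: P).count a = P.count a + 1 := List.count_cons_self
      have hb' : ∀ x ∈ P, x ≤ a := fun x hx => List.rel_of_pairwise_cons hs hx
      obtain ⟨h1, h2⟩ := ih hs.of_cons a hb'
      rw [hcount]
      constructor
      · rw [List.replicate_succ, List.drop_succ_cons, List.cons_append]
        exact congrArg (a :: ·) h1
      · rw [List.drop_succ_cons]
        exact h2
    · have ha : a < p := lt_of_le_of_ne (hb a (by simp)) hne
      have hc0 : (a :: P).count p = 0 := by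
        rw [List.count_eq_zero]
        intro hmem
        have hx := hb p hmem
        have : ∀ x ∈ (a :: P), x ≤ a := by
          intro x hx'
          rcases List.mem_cons.1 hx' with rfl | hx'
          · exact le_refl x
          · exact List.rel_of_pairwise_cons hs hx'
        have := this p hmem
        omega
      rw [hc0]
      refine ⟨by simp, fun x hx => ?_⟩
      rw [List.drop_zero] at hx
      rcases List.mem_cons.1 hx with rfl | hx'
      · exact ha
      · have := List.rel_of_pairwise_cons hs hx'
        omega

lemma comp_nil : comp ([] : List ℕ) = [] := by rw [comp]

lemma eq_build_comp : ∀ (N : ℕ) (P : List ℕ), P.length ≤ N → P.Pairwise (· ≥ ·) →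
    (∀ x ∈ P, 0 < x) → CICriterion P →
    P = build (P.headD 0 + P.count (P.headD 0)) (comp P) ∧
    Valid (P.headD 0 + P.count (P.headD 0)) (comp P) := by
  intro N
  induction N with
  | zero =>
    intro P hlen _ _ _
    have : P = [] := List.eq_nil_of_length_eq_zero (by omega)
    subst this
    rw [comp_nil]
    exact ⟨rfl, valid_nil _⟩
  | succ N ih =>
    intro P hlen hs hpos hci
    cases hP : P with
    | nil =>
      rw [comp_nil]
      exact ⟨rfl, valid_nil _⟩
    | cons a P' =>
      subst hP
      have hn1 : 0 < (a :: P').count a := by simp [List.count_cons_self]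
      have hbnd : ∀ x ∈ (a :: P'), x ≤ a := by
        intro x hx
        rcases List.mem_cons.1 hx with rfl | hx'
        · exact le_refl x
        · exact List.rel_of_pairwise_cons hs hx'
      obtain ⟨hblock, hdrop⟩ := sorted_block (a :: P') hs a hbnd
      have hcompP : comp (a :: P') = (a :: P').count a :: comp ((a :: P').drop ((a :: P').count a)) := by
        rw [comp]
      set n := (a :: P').count a with hn
      generalize hQdef : (a :: P').drop n = Q at hblock hdrop hcompP
      have hQsub : Q.Sublist (a :: P') := hQdef ▸ List.drop_sublist _ _
      have hQsorted : Q.Pairwise (· ≥ ·) := hs.sublist hQsub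
      have hQpos : ∀ x ∈ Q, 0 < x := fun x hx => hpos x (hQsub.mem hx)
      have hcnt : n ≤ (a :: P').length := hn ▸ List.count_le_length
      have hQlen : Q.length ≤ N := by
        have h1 : Q.length = (a :: P').length - n := by rw [← hQdef, List.length_drop]
        simp only [List.length_cons] at h1 hlen hcnt
        omega
      have hheadD : (a :: P').headD 0 = a := rfl
      have hapos : 0 < a := hpos a (by simp)
      have hcount_lift : ∀ x, x < a → (a :: P').count x = Q.count x := by
        intro x hx
        conv_lhs => rw [hblock]
        rw [List.count_append, List.count_replicate, if_neg (by simp only [beq_iff_eq]; omega)]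
        omega
      have hQci : CICriterion Q := by
        intro u v hu hv huv hgap
        have key := hci u v (hQsub.mem hu) (hQsub.mem hv) huv ?_
        · rw [hcount_lift u (hdrop u hu), hcount_lift v (hdrop v hv)] at key
          exact key
        · intro x hx
          by_cases hxQ : x ∈ Q
          · exact hgap x hxQ
          · right
            have hxa : x = a := by
              conv at hx => rw [hblock]
              rcases List.mem_append.1 hx with hx' | hx'
              · exact List.eq_of_mem_replicate hx'
              · exact absurd hx' hxQ
            subst hxa
            exact le_of_lt (hdrop u hu)
      rw [hheadD, hcompP, ← hn]
      cases hQ : Q with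
      | nil =>
        subst hQ
        rw [comp_nil]
        simp only [List.append_nil] at hblock
        constructor
        · show a :: P' = List.replicate n (a + n - n) ++ build (a + n - 2*n) []
          rw [show a + n - n = a from by omega]
          show a :: P' = List.replicate n a ++ []
          rw [List.append_nil]
          exact hblock
        · refine ⟨?_, ?_⟩
          · intro x hx
            simp only [List.mem_singleton] at hx
            subst hx
            exact hn1
          · intro j hj
            simp only [List.length_cons, List.length_nil] at hj
            have hj0 : j = 0 := by omega
            subst hj0
            simp only [List.take_zero, List.sum_nil, List.take_succ_cons, List.take_zero,
              List.sum_cons, Nat.zero_add]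
            omega
      | cons b Q' =>
        subst hQ
        obtain ⟨hQbuild, hQvalid⟩ := ih (b :: Q') hQlen hQsorted hQpos hQci
        have hbQhead : ((b :: Q').headD 0) = b := rfl
        rw [hbQhead] at hQbuild hQvalid
        set m := (b :: Q').count b with hm
        have hbmemP : b ∈ (a :: P') := hQsub.mem (by simp)
        have hba : b < a := hdrop b (by simp)
        have hgapab : ∀ x ∈ (a :: P'), x ≤ b ∨ a ≤ x := by
          intro x hx
          by_cases hxQ : x ∈ (b :: Q')
          · left
            rcases List.mem_cons.1 hxQ with rfl | hx'
            · exact le_refl x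
            · exact List.rel_of_pairwise_cons hQsorted hx'
          · right
            have hxa : x = a := by
              conv at hx => rw [hblock]
              rcases List.mem_append.1 hx with hx' | hx'
              · exact List.eq_of_mem_replicate hx'
              · exact absurd hx' hxQ
            omega
        have hkey := hci a b (by simp) hbmemP hba hgapab
        rw [← hn, hcount_lift b hba, ← hm] at hkey
        have hbm : b + m = a - n := by omega
        constructor
        · show a :: P' = List.replicate n (a + n - n) ++ build (a + n - 2*n) (comp (b :: Q'))
          rw [show a + n - n = a from by omega, show a + n - 2*n = a - n from by omega,
            ← hbm, ← hQbuild]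
          exact hblock
        · have hv := valid_cons hQvalid n hn1
          rw [show b + m + 2*n = a + n from by omega] at hv
          exact hv

def diffs : ℕ → List ℕ → List ℕ
  | _, [] => []
  | prev, a :: t => (a - prev) :: diffs a t

lemma length_diffs (prev : ℕ) (l : List ℕ) : (diffs prev l).length = l.length := by
  induction l generalizing prev with
  | nil => rfl
  | cons a t ih => simp [diffs, ih]

lemma diffs_pos {prev : ℕ} {l : List ℕ} (h : List.Chain (· < ·) prev l) :
    ∀ x ∈ diffs prev l, 0 < x := by
  induction l generalizing prev with
  | nil => simp [diffs]
  | cons a t ih =>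
    change List.IsChain (· < ·) (prev :: a :: t) at h
    rw [List.chain_cons] at h
    intro x hx
    rcases List.mem_cons.1 hx with rfl | hx'
    · omega
    · exact ih h.2 x hx'

lemma isPS_diffs {prev : ℕ} {l : List ℕ} (h : List.Chain (· < ·) prev l) :
    ∀ m, IsPS (diffs prev l) m ↔ (m = 0 ∨ (prev + m) ∈ l) := by
  induction l generalizing prev with
  | nil =>
    intro m
    simp only [diffs, List.not_mem_nil, or_false]
    constructor
    · rintro ⟨j, hj⟩
      simp at hj
      omega
    · rintro rfl
      exact isPS_zero _
  | cons a t ih =>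
    change List.IsChain (· < ·) (prev :: a :: t) at h
    rw [List.chain_cons] at h
    have hpa : prev < a := h.1
    have ht : ∀ x ∈ t, a < x := by
      have := List.isChain_iff_pairwise.1 h.2
      exact fun x hx => List.rel_of_pairwise_cons this hx
    intro m
    rw [show diffs prev (a :: t) = (a - prev) :: diffs a t from rfl, isPS_cons]
    simp only [List.mem_cons]
    constructor
    · rintro (rfl | ⟨m', hm', rfl⟩)
      · exact Or.inl rfl
      · rcases (ih h.2 m').1 hm' with rfl | hmem
        · right; left; omega
        · right; right
          have : prev + (a - prev + m') = a + m' := by omega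
          rw [this]
          exact hmem
    · rintro (rfl | he | hmem)
      · exact Or.inl rfl
      · right
        exact ⟨0, isPS_zero _, by omega⟩
      · right
        refine ⟨(prev + m) - a, (ih h.2 _).2 (Or.inr ?_), ?_⟩
        · have := ht _ hmem
          rw [show a + (prev + m - a) = prev + m from by omega]
          exact hmem
        · have := ht _ hmem
          omega

lemma sum_diffs {prev : ℕ} {l : List ℕ} (h : List.Chain (· < ·) prev l) :
    prev + (diffs prev l).sum = l.getLastD prev := by
  induction l generalizing prev with
  | nil => simp [diffs]
  | cons a t ih =>
    change List.IsChain (· < ·) (prev :: a :: t) at h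
    rw [List.chain_cons] at h
    have := ih h.2
    rw [show diffs prev (a :: t) = (a - prev) :: diffs a t from rfl, List.sum_cons,
      List.getLastD_cons]
    omega

lemma take_sum_diffs {prev : ℕ} {l : List ℕ} (h : List.Chain (· < ·) prev l) :
    ∀ j, j < l.length → prev + ((diffs prev l).take (j+1)).sum = l.getD j 0 := by
  induction l generalizing prev with
  | nil => simp
  | cons a t ih =>
    change List.IsChain (· < ·) (prev :: a :: t) at h
    rw [List.chain_cons] at h
    intro j hj
    cases j with
    | zero =>
      rw [show diffs prev (a :: t) = (a - prev) :: diffs a t from rfl]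
      simp only [List.take_succ_cons, List.take_zero, List.sum_cons, List.sum_nil,
        List.getD_cons_zero]
      omega
    | succ j' =>
      simp only [List.length_cons] at hj
      have := ih h.2 j' (by omega)
      rw [show diffs prev (a :: t) = (a - prev) :: diffs a t from rfl]
      simp only [List.take_succ_cons, List.sum_cons, List.getD_cons_succ]
      omega

lemma getD_mem {l : List ℕ} {j : ℕ} (h : j < l.length) : l.getD j 0 ∈ l := by
  rw [List.getD_eq_getElem l 0 h]
  exact List.getElem_mem h

lemma valid_diffs {V : ℕ} {l : List ℕ} (h : List.Chain (· < ·) 0 l)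
    (hp : ∀ x ∈ l.dropLast, ∀ y ∈ l, x + y < V)
    (h0 : ∀ x ∈ l, x < V) : Valid V (diffs 0 l) := by
  refine ⟨diffs_pos h, fun j hj => ?_⟩
  rw [length_diffs] at hj
  cases j with
  | zero =>
    have := take_sum_diffs h 0 (by omega)
    simp only [List.take_zero, List.sum_nil, Nat.zero_add] at this ⊢
    rw [this]
    exact h0 _ (getD_mem (by omega))
  | succ j' =>
    have h1 := take_sum_diffs h j' (by omega)
    have h2 := take_sum_diffs h (j'+1) (by omega)
    simp only [Nat.zero_add] at h1 h2
    rw [h1, h2]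
    refine hp _ ?_ _ (getD_mem (by omega))
    have hlt : j' < l.dropLast.length := by
      rw [List.length_dropLast]
      omega
    have : l.dropLast.getD j' 0 = l.getD j' 0 := by
      rw [List.getD_eq_getElem _ 0 hlt, List.getD_eq_getElem l 0 (by omega)]
      exact List.getElem_dropLast ..
    rw [← this]
    exact getD_mem hlt

lemma Valid.sum_lt {V : ℕ} {L : List ℕ} (h : Valid V L) (hne : L ≠ []) : L.sum < V := by
  have hl : 0 < L.length := List.length_pos_iff.2 hne
  have := h.2 (L.length - 1) (by omega)
  rw [show L.length - 1 + 1 = L.length from by omega, List.take_length] at this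
  omega

lemma take_sum_mono (L : List ℕ) {j j' : ℕ} (h : j ≤ j') :
    (L.take j).sum ≤ (L.take j').sum := by
  have h2 := take_sum_le (L.take j') j
  rw [List.take_take, min_eq_left h] at h2
  exact h2

lemma ps_small {V : ℕ} {L : List ℕ} (hv : Valid V L) {m : ℕ} (hm : IsPS L m)
    (hms : m < L.sum) : m + L.sum < V := by
  obtain ⟨j, rfl⟩ := hm
  have hne : L ≠ [] := by rintro rfl; simp at hms
  have hl : 0 < L.length := List.length_pos_iff.2 hne
  have hj : j ≤ L.length - 1 := by
    by_contra hc
    have : (L.take j).sum = L.sum := by rw [List.take_of_length_le (by omega)]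
    omega
  have h1 := take_sum_mono L hj
  have h2 := hv.2 (L.length - 1) (by omega)
  rw [show L.length - 1 + 1 = L.length from by omega, List.take_length] at h2
  omega

set_option maxHeartbeats 1000000 in
lemma classify {d k : ℕ} (hd : 2 ≤ d) (hk : 1 ≤ k) {P : List ℕ}
    (hsorted : P.Pairwise (· ≥ ·)) (hpos : ∀ x ∈ P, 0 < x)
    (hdiag : ∀ i, diagLen P i = Tdk d k i) (hci : CICriterion P) :
    P = build (2*d+k-1) (comp P) ∧ Valid (2*d+k-1) (comp P) ∧
    ((comp P).sum = d ∨ (comp P).sum = d + k - 1) := by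
  obtain ⟨hPb, hPv⟩ := eq_build_comp P.length P (le_refl _) hsorted hpos hci
  revert hPb hPv
  generalize hV₀def : P.headD 0 + P.count (P.headD 0) = V₀
  generalize hLdef : comp P = L
  intro hPb hPv
  have hlen : P.length = L.sum := by
    conv_lhs => rw [hPb]
    exact length_build _ _
  have key : ∀ i, Tdk d k i + (L.sum - (i+1)) = min L.sum (V₀ - 1 - i) := by
    intro i
    have h1 := diagLen_eq_dl P i
    have h2 := qc_eq_dl i 0 P hpos
    have h3 : qc i 0 P = min L.sum (V₀ - 1 + 0 - i) := by
      conv_lhs => rw [hPb]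
      exact qc_build hPv i 0
    rw [hdiag i] at h1
    omega
  have hsl : L = [] ∨ L.sum < V₀ := by
    rcases eq_or_ne L [] with h | h
    · exact Or.inl h
    · exact Or.inr (hPv.sum_lt h)
  have hsl' : L = [] → L.sum = 0 := by rintro rfl; rfl
  have hTd : Tdk d k (d-1) = d := by
    simp only [Tdk]
    rw [if_pos (by omega)]
    omega
  have hV : V₀ = 2*d+k-1 := by
    have k1 := key (d-1)
    have k2 := key (V₀-1)
    have k3 := key (V₀-2)
    rw [hTd] at k1
    simp only [Tdk] at k2 k3
    rcases hsl with h | h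
    · rw [hsl' h] at k1; omega
    · split_ifs at k2 k3 <;> omega
  have hlen2 : L.sum = d ∨ L.sum = d + k - 1 := by
    have k1 := key (d-1)
    have k5 := key (L.sum - 1)
    rw [hTd] at k1
    simp only [Tdk] at k5
    rw [hV] at k1 k5
    rcases hsl with h | h
    · rw [hsl' h] at k1; omega
    · split_ifs at k5 <;> omega
  rw [hV] at hPb hPv
  exact ⟨hPb, hPv, hlen2⟩

lemma S_char {d k : ℕ} (hd : 2 ≤ d) (hk : 1 ≤ k) {L : List ℕ} (hv : Valid (2*d+k-1) L)
    (hsum : d ≤ L.sum) (i : ℕ) (hi : i + 1 ≤ d) :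
    (((build (2*d+k-1) L).take (i+1)).sum = (i+1) * (2*d+k-2-i) ↔ IsPS L (i+1)) := by
  have he : (i+1) * (2*d+k-2-i) = (i+1) * (2*d+k-1 - (i+1)) := by
    congr 1
    omega
  rw [he]
  constructor
  · intro hsumEq
    by_contra hnps
    have := take_build_lt hv (i+1) (by omega) (by omega)
      (fun j hj => hnps ⟨j, hj⟩)
    omega
  · rintro ⟨j, hj⟩
    have := take_build_ps hv j
    rw [hj] at this
    exact this

end S18

open S18 in
set_option maxHeartbeats 1000000 in
/-- CIJT partitions ↔ subsets of active Hessians. The map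
sending a CIJT partition `P` of diagonal lengths `T(d,k)` to its set of
nonvanishing Hessian indices `{i < D : p_1 + ⋯ + p_(i+1) = (i+1)(2d+k-2-i)}`
(`D = d` if `k ≥ 2`, `D = d-1` if `k = 1`) is a bijection onto the subsets of
`{0, …, D-1}`; in particular there are `2^D` such partitions. -/
theorem stmt_18 (d k : ℕ) (hd : 2 ≤ d) (hk : 1 ≤ k)
    (D : ℕ) (hD : D = if 2 ≤ k then d else d - 1) :
    Set.BijOn
      (fun P : List ℕ =>
        {i : ℕ | i < D ∧ (P.take (i + 1)).sum = (i + 1) * (2 * d + k - 2 - i)})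
      {P : List ℕ | IsPartitionList P ∧ P.sum = d * (d + k - 1) ∧
        (∀ i : ℕ, diagLen P i = Tdk d k i) ∧ CICriterion P}
      {s : Set ℕ | ∀ i ∈ s, i < D} ∧
    {P : List ℕ | IsPartitionList P ∧ P.sum = d * (d + k - 1) ∧
        (∀ i : ℕ, diagLen P i = Tdk d k i) ∧ CICriterion P}.ncard = 2 ^ D := by
  classical
  have hDd : D ≤ d := by rw [hD]; split_ifs <;> omega
  have hD1 : 1 ≤ D := by rw [hD]; split_ifs <;> omega
  have hmaps : Set.MapsTo
      (fun P : List ℕ =>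
        {i : ℕ | i < D ∧ (P.take (i + 1)).sum = (i + 1) * (2 * d + k - 2 - i)})
      {P : List ℕ | IsPartitionList P ∧ P.sum = d * (d + k - 1) ∧
        (∀ i : ℕ, diagLen P i = Tdk d k i) ∧ CICriterion P}
      {s : Set ℕ | ∀ i ∈ s, i < D} := by
    intro P _
    intro i hi
    exact hi.1
  have hinj : Set.InjOn
      (fun P : List ℕ =>
        {i : ℕ | i < D ∧ (P.take (i + 1)).sum = (i + 1) * (2 * d + k - 2 - i)})
      {P : List ℕ | IsPartitionList P ∧ P.sum = d * (d + k - 1) ∧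
        (∀ i : ℕ, diagLen P i = Tdk d k i) ∧ CICriterion P} := by
    intro P hP P' hP' hfeq
    obtain ⟨⟨hs, hpos⟩, hsum, hdiag, hci⟩ := hP
    obtain ⟨⟨hs', hpos'⟩, hsum', hdiag', hci'⟩ := hP'
    obtain ⟨hb, hv, hopt⟩ := classify hd hk hs hpos hdiag hci
    obtain ⟨hb', hv', hopt'⟩ := classify hd hk hs' hpos' hdiag' hci'
    have hdle : d ≤ (comp P).sum := by rcases hopt with h | h <;> omega
    have hdle' : d ≤ (comp P').sum := by rcases hopt' with h | h <;> omega
    have hiff : ∀ i, i < D → (IsPS (comp P) (i+1) ↔ IsPS (comp P') (i+1)) := by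
      intro i hi
      have h1 := S_char hd hk hv hdle i (by omega)
      have h2 := S_char hd hk hv' hdle' i (by omega)
      rw [← hb] at h1
      rw [← hb'] at h2
      have h3 := Set.ext_iff.1 hfeq i
      simp only [Set.mem_setOf_eq] at h3
      rw [← h1, ← h2]
      constructor
      · intro he; exact (h3.1 ⟨hi, he⟩).2
      · intro he; exact (h3.2 ⟨hi, he⟩).2
    have hsume : (comp P).sum = (comp P').sum := by
      rcases le_or_gt 2 k with hk2 | hk1
      · have hiffd := hiff (d-1) (by rw [hD, if_pos hk2]; omega)
        rw [show d - 1 + 1 = d from by omega] at hiffd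
        have c1 : IsPS (comp P) d → (comp P).sum = d := by
          intro hps
          rcases hopt with h | h
          · exact h
          · exfalso
            have := ps_small hv hps (by omega)
            omega
        have c1' : IsPS (comp P') d → (comp P').sum = d := by
          intro hps
          rcases hopt' with h | h
          · exact h
          · exfalso
            have := ps_small hv' hps (by omega)
            omega
        rcases hopt with h | h <;> rcases hopt' with h' | h'
        · omega
        · have := c1' (hiffd.1 (h ▸ isPS_sum (comp P)))
          omega
        · have := c1 (hiffd.2 (h' ▸ isPS_sum (comp P')))
          omega
        · omega
      · rcases hopt with h | h <;> rcases hopt' with h' | h' <;> omega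
    have hfull : ∀ m, IsPS (comp P) m ↔ IsPS (comp P') m := by
      intro m
      rcases eq_or_ne m 0 with rfl | hm0
      · exact ⟨fun _ => isPS_zero _, fun _ => isPS_zero _⟩
      rcases eq_or_ne m ((comp P).sum) with rfl | hmtop
      · exact ⟨fun _ => hsume ▸ isPS_sum (comp P'), fun _ => isPS_sum (comp P)⟩
      constructor
      · intro hps
        have hlt : m < (comp P).sum := lt_of_le_of_ne (isPS_le hps) hmtop
        have hsm := ps_small hv hps hlt
        have hmd : m < d := by rcases hopt with h | h <;> omega
        have := (hiff (m-1) (by rw [hD]; split_ifs <;> omega)).1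
          (by rwa [show m - 1 + 1 = m from by omega])
        rwa [show m - 1 + 1 = m from by omega] at this
      · intro hps
        have hlt : m < (comp P').sum := lt_of_le_of_ne (isPS_le hps) (hsume ▸ hmtop)
        have hsm := ps_small hv' hps hlt
        have hmd : m < d := by rcases hopt' with h | h <;> omega
        have := (hiff (m-1) (by rw [hD]; split_ifs <;> omega)).2
          (by rwa [show m - 1 + 1 = m from by omega])
        rwa [show m - 1 + 1 = m from by omega] at this
    have hLL : comp P = comp P' := comp_eq_of_ps _ _ hv.1 hv'.1 hfull
    rw [hb, hb', hLL]
  have hsurj : Set.SurjOn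
      (fun P : List ℕ =>
        {i : ℕ | i < D ∧ (P.take (i + 1)).sum = (i + 1) * (2 * d + k - 2 - i)})
      {P : List ℕ | IsPartitionList P ∧ P.sum = d * (d + k - 1) ∧
        (∀ i : ℕ, diagLen P i = Tdk d k i) ∧ CICriterion P}
      {s : Set ℕ | ∀ i ∈ s, i < D} := by
    intro s hs
    simp only [Set.mem_setOf_eq] at hs
    have hsfin : s.Finite := Set.Finite.subset (Set.finite_Iio D) (fun i hi => hs i hi)
    set l := (hsfin.toFinset.erase (d-1)).sort (· ≤ ·) with hl
    have hsortl : l.Pairwise (· < ·) := List.sortedLT_iff_pairwise.1 (Finset.sortedLT_sort _)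
    have hmeml : ∀ i, i ∈ l ↔ (i ∈ s ∧ i ≠ d - 1) := by
      intro i
      rw [hl, Finset.mem_sort, Finset.mem_erase, Set.Finite.mem_toFinset]
      tauto
    have hbnd : ∀ i ∈ l, i + 1 ≤ d - 1 := by
      intro i hi
      have h1 := (hmeml i).1 hi
      have h2 := hs i h1.1
      have h3 := h1.2
      omega
    set len₀ := if 2 ≤ k ∧ (d-1) ∈ s then d else if 2 ≤ k then d + k - 1 else d with hlen₀
    have hlen₀d : d ≤ len₀ ∧ len₀ ≤ d + k - 1 := by rw [hlen₀]; split_ifs <;> omega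
    set ps := l.map (· + 1) ++ [len₀] with hps
    have hmem_ps : ∀ y ∈ ps, y ≤ d + k - 1 := by
      intro y hy
      rw [hps] at hy
      rcases List.mem_append.1 hy with hy | hy
      · obtain ⟨a, ha, rfl⟩ := List.mem_map.1 hy
        have := hbnd a ha
        omega
      · simp only [List.mem_singleton] at hy
        omega
    have hchain : List.Chain (· < ·) 0 ps := by
      show List.IsChain (· < ·) (0 :: ps)
      rw [List.isChain_iff_pairwise, hps,
        show (0 :: (l.map (· + 1) ++ [len₀])) = ((0 :: l.map (· + 1)) ++ [len₀]) from rfl,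
        List.pairwise_append]
      refine ⟨?_, List.pairwise_singleton _ _, ?_⟩
      · rw [List.pairwise_cons]
        refine ⟨?_, List.Pairwise.map _ (fun h => by omega) hsortl⟩
        intro x hx
        obtain ⟨a, _, rfl⟩ := List.mem_map.1 hx
        omega
      · intro x hx y hy
        simp only [List.mem_singleton] at hy
        subst hy
        rcases List.mem_cons.1 hx with rfl | hx'
        · omega
        · obtain ⟨a, ha, rfl⟩ := List.mem_map.1 hx'
          have := hbnd a ha
          omega
    set L := diffs 0 ps with hL
    have hvalid : Valid (2*d+k-1) L := by
      apply valid_diffs hchain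
      · intro x hx y hy
        rw [hps, List.dropLast_concat] at hx
        obtain ⟨a, ha, rfl⟩ := List.mem_map.1 hx
        have h1 := hbnd a ha
        have h2 := hmem_ps y hy
        omega
      · intro x hx
        have := hmem_ps x hx
        omega
    have hsumL : L.sum = len₀ := by
      have h1 := sum_diffs hchain
      rw [hps] at h1
      rw [List.getLastD_concat] at h1
      rw [hL, hps]
      omega
    have hsumopt : L.sum = d ∨ L.sum = d + k - 1 := by
      rw [hsumL, hlen₀]; split_ifs <;> omega
    refine ⟨build (2*d+k-1) L, ⟨⟨sorted_build hvalid, pos_build hvalid⟩, ?_, ?_, CI_build hvalid⟩, ?_⟩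
    · -- sum
      have h1 := take_build_ps hvalid L.length
      rw [List.take_length] at h1
      have h2 : (build (2*d+k-1) L).take L.sum = build (2*d+k-1) L := by
        rw [← length_build (2*d+k-1) L, List.take_length]
      rw [h2] at h1
      rw [h1]
      rcases hsumopt with h | h <;> rw [h]
      · rw [show 2*d+k-1-d = d + k - 1 from by omega]
      · rw [show 2*d+k-1-(d+k-1) = d from by omega, Nat.mul_comm]
    · -- diagLen
      intro i
      have h1 := diagLen_eq_dl (build (2*d+k-1) L) i
      have h2 := qc_eq_dl i 0 _ (pos_build hvalid)
      have h3 := qc_build hvalid i 0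
      rw [length_build] at h2
      rw [h1]
      simp only [Tdk]
      rcases hsumopt with h | h <;> rw [h] at h2 h3 <;> split_ifs <;> omega
    · -- image = s
      ext i
      simp only [Set.mem_setOf_eq]
      constructor
      · rintro ⟨hiD, heq⟩
        have hips := (S_char hd hk hvalid (by omega) i (by omega)).1 heq
        rcases (isPS_diffs hchain (i+1)).1 hips with h0 | hmem
        · omega
        · simp only [Nat.zero_add] at hmem
          rw [hps] at hmem
          rcases List.mem_append.1 hmem with hm | hm
          · obtain ⟨a, ha, hae⟩ := List.mem_map.1 hm
            have haa : a = i := by omega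
            subst haa
            exact ((hmeml a).1 ha).1
          · simp only [List.mem_singleton] at hm
            rw [hlen₀] at hm
            split_ifs at hm with hc hc2
            · have : i = d - 1 := by omega
              subst this
              exact hc.2
            · exfalso
              rw [hD, if_pos hc2] at hiD
              omega
            · exfalso
              rw [hD, if_neg hc2] at hiD
              omega
      · intro his
        have hiD : i < D := hs i his
        refine ⟨hiD, ?_⟩
        apply (S_char hd hk hvalid (by omega) i (by omega)).2
        apply (isPS_diffs hchain (i+1)).2
        right
        simp only [Nat.zero_add]
        rw [hps]
        by_cases hid : i = d - 1
        · have hk2 : 2 ≤ k := by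
            by_contra hkk
            rw [hD, if_neg hkk] at hiD
            omega
          apply List.mem_append.2 (Or.inr _)
          simp only [List.mem_singleton]
          rw [hlen₀, if_pos ⟨hk2, hid ▸ his⟩]
          omega
        · apply List.mem_append.2 (Or.inl _)
          exact List.mem_map.2 ⟨i, (hmeml i).2 ⟨his, hid⟩, rfl⟩
  refine ⟨⟨hmaps, hinj, hsurj⟩, ?_⟩
  have himg := Set.BijOn.image_eq ⟨hmaps, hinj, hsurj⟩
  rw [← Set.ncard_image_of_injOn hinj, himg]
  have he : {s : Set ℕ | ∀ i ∈ s, i < D} ≃ Set (Fin D) :=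
    { toFun := fun s => {j : Fin D | (j : ℕ) ∈ s.1}
      invFun := fun t => ⟨{i : ℕ | ∃ h : i < D, (⟨i, h⟩ : Fin D) ∈ t}, fun i hi => hi.1⟩
      left_inv := by
        intro s
        apply Subtype.ext
        ext i
        simp only [Set.mem_setOf_eq]
        constructor
        · rintro ⟨h, hm⟩
          exact hm
        · intro hm
          exact ⟨s.2 i hm, hm⟩
      right_inv := by
        intro t
        ext j
        simp only [Set.mem_setOf_eq, Fin.eta]
        constructor
        · rintro ⟨h, hm⟩
          convert hm
        · intro hm
          exact ⟨j.isLt, by convert hm⟩ }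
  rw [← Nat.card_coe_set_eq, Nat.card_congr he, Nat.card_eq_fintype_card,
    Fintype.card_set, Fintype.card_fin]
end
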